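/- There is an absolute constant C > 0 such that for every integer n ≥ 2, ∑_{p | n} (log p)/p ≤ C · log(ω(n) + 2), where the sum runs over the primes p dividing n and ω(n) denotes the number of distinct prime factors of n. -/

import Mathlib

open Finset

/-- Chebyshev-type bound from the primorial bound. -/
lemma cheb_log_sum (N : ℕ) :
    ∑ p ∈ (Finset.range (N + 1)).filter Nat.Prime, Real.log p ≤ N * Real.log 4 := by
  have h4 : ((primorial N : ℕ) : ℝ) ≤ (4 : ℝ) ^ N := by
    exact_mod_cast primorial_le_4_pow N
  have hpos : (0 : ℝ) < (primorial N : ℝ) := by exact_mod_cast primorial_pos N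
  have hlog : Real.log (primorial N) ≤ N * Real.log 4 := by
    calc Real.log (primorial N) ≤ Real.log ((4 : ℝ) ^ N) := Real.log_le_log hpos h4
      _ = N * Real.log 4 := by rw [Real.log_pow]
  have hprod : Real.log (primorial N)
      = ∑ p ∈ (Finset.range (N + 1)).filter Nat.Prime, Real.log p := by
    rw [primorial]
    push_cast
    rw [Real.log_prod]
    intro p hp
    have := (Finset.mem_filter.1 hp).2.pos
    positivity
  linarith [hlog, hprod.symm.le]

/-- Mertens-type dyadic bound. -/
lemma mertens_dyadic (J : ℕ) :
    ∑ p ∈ (Finset.range (2 ^ J)).filter Nat.Prime, Real.log p / p ≤ J * (2 * Real.log 4) := by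
  induction J with
  | zero =>
    rw [show (Finset.range (2 ^ 0)).filter Nat.Prime = ∅ from by decide]
    simp
  | succ J ih =>
    have hle : (2 : ℕ) ^ J ≤ 2 ^ (J + 1) := Nat.pow_le_pow_right (by norm_num) (Nat.le_succ J)
    have hsplit : ∑ p ∈ (Finset.range (2 ^ (J + 1))).filter Nat.Prime, Real.log p / p
        = ∑ p ∈ (Finset.range (2 ^ J)).filter Nat.Prime, Real.log p / p
          + ∑ p ∈ (Finset.Ico (2 ^ J) (2 ^ (J + 1))).filter Nat.Prime, Real.log p / p := by
      rw [Finset.sum_filter, Finset.sum_filter, Finset.sum_filter, Finset.range_eq_Ico, Finset.range_eq_Ico]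
      exact (Finset.sum_Ico_consecutive (fun p : ℕ => if Nat.Prime p then Real.log p / p else 0) (Nat.zero_le _) hle).symm
    have hIco : ∑ p ∈ (Finset.Ico (2 ^ J) (2 ^ (J + 1))).filter Nat.Prime, Real.log p / p
        ≤ 2 * Real.log 4 := by
      have h1 : ∀ p ∈ (Finset.Ico (2 ^ J) (2 ^ (J + 1))).filter Nat.Prime,
          Real.log p / p ≤ Real.log p / (2 ^ J : ℝ) := by
        intro p hp
        rw [Finset.mem_filter, Finset.mem_Ico] at hp
        have hp1 : (1 : ℝ) ≤ p := by exact_mod_cast hp.2.one_lt.le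
        apply div_le_div_of_nonneg_left (Real.log_nonneg hp1) (by positivity)
        exact_mod_cast hp.1.1
      have h2 : ∑ p ∈ (Finset.Ico (2 ^ J) (2 ^ (J + 1))).filter Nat.Prime, Real.log p
          ≤ ∑ p ∈ (Finset.range (2 ^ (J + 1))).filter Nat.Prime, Real.log p := by
        apply Finset.sum_le_sum_of_subset_of_nonneg
        · intro p hp
          rw [Finset.mem_filter, Finset.mem_Ico] at hp
          exact Finset.mem_filter.2 ⟨Finset.mem_range.2 hp.1.2, hp.2⟩
        · intro p hp _
          have := ((Finset.mem_filter.1 hp).2).one_lt.le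
          exact Real.log_nonneg (by exact_mod_cast this)
      have h3 : ∑ p ∈ (Finset.range (2 ^ (J + 1))).filter Nat.Prime, Real.log p
          ≤ (2 ^ (J + 1) : ℝ) * Real.log 4 := by
        have := cheb_log_sum (2 ^ (J + 1) - 1)
        have hr : 2 ^ (J + 1) - 1 + 1 = 2 ^ (J + 1) := by
          have : 1 ≤ 2 ^ (J + 1) := Nat.one_le_two_pow
          omega
        rw [hr] at this
        refine this.trans ?_
        have h4 : ((2 ^ (J + 1) - 1 : ℕ) : ℝ) ≤ (2 ^ (J + 1) : ℝ) := by
          have : ((2 ^ (J + 1) - 1 : ℕ) : ℝ) ≤ ((2 ^ (J + 1) : ℕ) : ℝ) := by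
            exact_mod_cast Nat.sub_le _ 1
          simpa using this
        have hlog4 : (0:ℝ) ≤ Real.log 4 := Real.log_nonneg (by norm_num)
        nlinarith
      calc ∑ p ∈ (Finset.Ico (2 ^ J) (2 ^ (J + 1))).filter Nat.Prime, Real.log p / p
          ≤ ∑ p ∈ (Finset.Ico (2 ^ J) (2 ^ (J + 1))).filter Nat.Prime,
              Real.log p / (2 ^ J : ℝ) := Finset.sum_le_sum h1
        _ = (∑ p ∈ (Finset.Ico (2 ^ J) (2 ^ (J + 1))).filter Nat.Prime, Real.log p)
              / (2 ^ J : ℝ) := by rw [Finset.sum_div]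
        _ ≤ ((2 ^ (J + 1) : ℝ) * Real.log 4) / (2 ^ J : ℝ) := by
            apply div_le_div_of_nonneg_right ?_ (by positivity) |>.trans_eq rfl
            exact h2.trans h3
        _ = 2 * Real.log 4 := by
            rw [pow_succ]; field_simp
    rw [hsplit]
    push_cast
    linarith

/-- There is an absolute constant `C > 0` such that for every `n ≥ 2`,
`∑_{p | n} (log p)/p ≤ C · log(ω(n) + 2)`. -/
theorem stmt12 :
    ∃ C : ℝ, 0 < C ∧
    ∀ n : ℕ, 2 ≤ n →
      ∑ p ∈ n.primeFactors, Real.log p / p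
        ≤ C * Real.log (n.primeFactors.card + 2) := by
  have hlog4 : (0:ℝ) < Real.log 4 := Real.log_pos (by norm_num)
  refine ⟨12 * Real.log 4 + 2, by linarith, ?_⟩
  intro n hn
  set S := n.primeFactors with hS
  set k := S.card with hk
  have hknn : (0:ℝ) ≤ (k:ℝ) := Nat.cast_nonneg k
  set L := Nat.log 2 (k + 2) with hL
  set J := 2 * (L + 1) with hJ
  have hllog : (0:ℝ) < Real.log ((k:ℝ) + 2) := by
    apply Real.log_pos; linarith
  have h2J : (k + 2) ^ 2 ≤ 2 ^ J := by
    rw [hJ, mul_comm, pow_mul]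
    exact Nat.pow_le_pow_left (Nat.lt_pow_succ_log_self (b := 2) (by norm_num) (k + 2)).le 2
  have hLlog : (L : ℝ) * Real.log 2 ≤ Real.log ((k:ℝ) + 2) := by
    have h1 : (2:ℕ) ^ L ≤ k + 2 := Nat.pow_log_le_self 2 (by omega)
    have h2 : ((2:ℝ)) ^ L ≤ (k:ℝ) + 2 := by exact_mod_cast h1
    calc (L:ℝ) * Real.log 2 = Real.log ((2:ℝ) ^ L) := by rw [Real.log_pow]
      _ ≤ Real.log ((k:ℝ) + 2) := Real.log_le_log (by positivity) h2
  have hlog2 : (0.6931:ℝ) < Real.log 2 := by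
    have := Real.log_two_gt_d9; linarith
  have hlog2le : Real.log 2 ≤ Real.log ((k:ℝ) + 2) := Real.log_le_log (by norm_num) (by linarith)
  have hJle : (J:ℝ) ≤ 6 * Real.log ((k:ℝ) + 2) := by
    have hJl2 : (J:ℝ) * Real.log 2 ≤ 4 * Real.log ((k:ℝ) + 2) := by
      push_cast [hJ]
      nlinarith
    nlinarith [(Nat.cast_nonneg J : (0:ℝ) ≤ (J:ℝ))]
  have hsplit := (Finset.sum_filter_add_sum_filter_not S (fun p => p < 2 ^ J)
    (fun p => Real.log p / p)).symm
  have hsmall : ∑ p ∈ S.filter (fun p => p < 2 ^ J), Real.log p / p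
      ≤ (J:ℝ) * (2 * Real.log 4) := by
    refine le_trans ?_ (mertens_dyadic J)
    apply Finset.sum_le_sum_of_subset_of_nonneg
    · intro p hp
      rw [Finset.mem_filter] at hp
      exact Finset.mem_filter.2 ⟨Finset.mem_range.2 hp.2, Nat.prime_of_mem_primeFactors hp.1⟩
    · intro p hp _
      have hp2 := (Finset.mem_filter.1 hp).2
      have h1 : (1:ℝ) ≤ p := by exact_mod_cast hp2.one_lt.le
      exact div_nonneg (Real.log_nonneg h1) (by linarith)
  have hbig : ∑ p ∈ S.filter (fun p => ¬ p < 2 ^ J), Real.log p / p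
      ≤ 2 * Real.log ((k:ℝ) + 2) := by
    have hm : Real.exp 1 ≤ ((k:ℝ) + 2) ^ 2 := by
      have := Real.exp_one_lt_d9
      nlinarith
    have hterm : ∀ p ∈ S.filter (fun p => ¬ p < 2 ^ J),
        Real.log p / p ≤ 2 * Real.log ((k:ℝ) + 2) / ((k:ℝ) + 2) ^ 2 := by
      intro p hp
      rw [Finset.mem_filter, not_lt] at hp
      have h0 : ((k + 2) ^ 2 : ℕ) ≤ p := le_trans h2J hp.2
      have hpge : ((k:ℝ) + 2) ^ 2 ≤ (p:ℝ) := by exact_mod_cast h0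
      have h := Real.log_div_self_antitoneOn (Set.mem_setOf.2 hm)
        (Set.mem_setOf.2 (hm.trans hpge)) hpge
      calc Real.log p / p ≤ Real.log (((k:ℝ) + 2) ^ 2) / ((k:ℝ) + 2) ^ 2 := h
        _ = 2 * Real.log ((k:ℝ) + 2) / ((k:ℝ) + 2) ^ 2 := by
            rw [Real.log_pow]; norm_num
    have hcard := Finset.sum_le_card_nsmul _ _ _ hterm
    rw [nsmul_eq_mul] at hcard
    have hc : ((S.filter (fun p => ¬ p < 2 ^ J)).card : ℝ) ≤ (k:ℝ) := by
      exact_mod_cast Finset.card_filter_le S _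
    have hb : (0:ℝ) ≤ 2 * Real.log ((k:ℝ) + 2) / ((k:ℝ) + 2) ^ 2 := by positivity
    have hd : (0:ℝ) < ((k:ℝ) + 2) ^ 2 := by positivity
    refine hcard.trans ?_
    refine le_trans (mul_le_mul_of_nonneg_right hc hb) ?_
    rw [mul_div_assoc', div_le_iff₀ hd]
    nlinarith [mul_nonneg hllog.le (show (0:ℝ) ≤ ((k:ℝ) + 2) ^ 2 - (k:ℝ) from by nlinarith [sq_nonneg (k:ℝ)])]
  rw [hsplit]
  have h1 : (J:ℝ) * (2 * Real.log 4) ≤ 12 * Real.log 4 * Real.log ((k:ℝ) + 2) := by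
    nlinarith
  linarith
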